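/- Let (R_μ)_{μ ∈ I} be any finite family of Hermitian n×n complex matrices with the associated quantities α₁, α₂, β₁, β₂, β₃, β₄, β₅. Then max_{i,j ∈ {1,2}} |α_i · α_j| ≥ max_{u ∈ {1,…,5}} |β_u|. -/

import Mathlib

open Matrix Finset

/-- Real part of the trace of a complex matrix (the traces in question are real
for Hermitian matrices). -/
noncomputable def rtr {α : Type} [Fintype α] (M : Matrix α α ℂ) : ℝ :=
  (Matrix.trace M).re

/-- α₁ = ∑_μ (Tr R_μ)². -/
noncomputable def alpha1 {α I : Type} [Fintype α] [Fintype I]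
    (R : I → Matrix α α ℂ) : ℝ := ∑ μ, (rtr (R μ)) ^ 2

/-- α₂ = ∑_μ Tr(R_μ²). -/
noncomputable def alpha2 {α I : Type} [Fintype α] [Fintype I]
    (R : I → Matrix α α ℂ) : ℝ := ∑ μ, rtr (R μ * R μ)

/-- β₁ = ∑_{μ,ν} (Tr(R_μ R_ν))². -/
noncomputable def beta1 {α I : Type} [Fintype α] [Fintype I]
    (R : I → Matrix α α ℂ) : ℝ := ∑ μ, ∑ ν, (rtr (R μ * R ν)) ^ 2

/-- β₂ = ∑_{μ,ν} Tr(R_μ R_ν)·Tr(R_μ)·Tr(R_ν). -/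
noncomputable def beta2 {α I : Type} [Fintype α] [Fintype I]
    (R : I → Matrix α α ℂ) : ℝ := ∑ μ, ∑ ν, rtr (R μ * R ν) * rtr (R μ) * rtr (R ν)

/-- β₃ = ∑_{μ,ν} Tr(R_μ R_ν²)·Tr(R_μ). -/
noncomputable def beta3 {α I : Type} [Fintype α] [Fintype I]
    (R : I → Matrix α α ℂ) : ℝ := ∑ μ, ∑ ν, rtr (R μ * (R ν * R ν)) * rtr (R μ)

/-- β₄ = ∑_{μ,ν} Tr(R_μ² R_ν²). -/
noncomputable def beta4 {α I : Type} [Fintype α] [Fintype I]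
    (R : I → Matrix α α ℂ) : ℝ := ∑ μ, ∑ ν, rtr (R μ * R μ * (R ν * R ν))

/-- β₅ = ∑_{μ,ν} Tr(R_μ R_ν R_μ R_ν). -/
noncomputable def beta5 {α I : Type} [Fintype α] [Fintype I]
    (R : I → Matrix α α ℂ) : ℝ := ∑ μ, ∑ ν, rtr (R μ * R ν * R μ * R ν)

/-- max_{i,j ∈ {1,2}} |α_i α_j|. -/
noncomputable def maxAlpha {α I : Type} [Fintype α] [Fintype I]
    (R : I → Matrix α α ℂ) : ℝ :=
  max (max |alpha1 R * alpha1 R| |alpha1 R * alpha2 R|)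
      (max |alpha2 R * alpha1 R| |alpha2 R * alpha2 R|)

/-- max_{u ∈ {1,…,5}} |β_u|. -/
noncomputable def maxBeta {α I : Type} [Fintype α] [Fintype I]
    (R : I → Matrix α α ℂ) : ℝ :=
  max |beta1 R| (max |beta2 R| (max |beta3 R| (max |beta4 R| |beta5 R|)))

section Aux

attribute [local instance] Matrix.frobeniusSeminormedAddCommGroup

variable {n : ℕ}

/-- vectorization into EuclideanSpace -/
noncomputable def matVec (A : Matrix (Fin n) (Fin n) ℂ) : EuclideanSpace ℂ (Fin n × Fin n) :=
  (WithLp.equiv 2 _).symm (fun p => A p.1 p.2)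

lemma inner_matVec (A B : Matrix (Fin n) (Fin n) ℂ) :
    (inner ℂ (matVec A) (matVec B) : ℂ) = Matrix.trace (Aᴴ * B) := by
  simp only [PiLp.inner_apply, matVec, Matrix.trace, Matrix.diag, Matrix.mul_apply,
    Matrix.conjTranspose_apply, RCLike.inner_apply, WithLp.equiv_symm_apply, PiLp.toLp_apply]
  rw [← Finset.sum_product']
  rw [← Finset.univ_product_univ]
  exact Finset.sum_nbij' Prod.swap Prod.swap (by simp) (by simp) (by simp) (by simp)
    (by intro x _; exact mul_comm _ _)

lemma norm_matVec (A : Matrix (Fin n) (Fin n) ℂ) : ‖matVec A‖ = ‖A‖ := by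
  rw [EuclideanSpace.norm_eq, Matrix.frobenius_norm_def, Real.sqrt_eq_rpow,
    ← Finset.sum_product']
  congr 1
  simp [matVec, Finset.univ_product_univ]

lemma mat_cs (A B : Matrix (Fin n) (Fin n) ℂ) :
    |rtr (Aᴴ * B)| ≤ ‖A‖ * ‖B‖ := by
  rw [rtr, ← inner_matVec]
  calc |(inner ℂ (matVec A) (matVec B) : ℂ).re| ≤ ‖(inner ℂ (matVec A) (matVec B) : ℂ)‖ :=
        Complex.abs_re_le_norm _
    _ ≤ ‖matVec A‖ * ‖matVec B‖ := norm_inner_le_norm _ _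
    _ = ‖A‖ * ‖B‖ := by rw [norm_matVec, norm_matVec]

lemma rtr_self (A : Matrix (Fin n) (Fin n) ℂ) : rtr (Aᴴ * A) = ‖A‖ ^ 2 := by
  rw [rtr, ← inner_matVec, ← norm_matVec, ← RCLike.re_to_complex, inner_self_eq_norm_sq]

lemma sqrt_max_of_sq_le {a b c : ℝ} (ha : 0 ≤ a) (hb : 0 ≤ b) (hc : 0 ≤ c)
    (h : c ^ 2 ≤ a * b) : c ≤ max a b := by
  have hm : 0 ≤ max a b := le_trans ha (le_max_left _ _)
  have : c ^ 2 ≤ (max a b) ^ 2 := by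
    calc c ^ 2 ≤ a * b := h
      _ ≤ max a b * max a b := mul_le_mul (le_max_left _ _) (le_max_right _ _) hb hm
      _ = (max a b) ^ 2 := (sq (max a b)).symm
  calc c = Real.sqrt (c ^ 2) := (Real.sqrt_sq hc).symm
    _ ≤ Real.sqrt ((max a b) ^ 2) := Real.sqrt_le_sqrt this
    _ = max a b := Real.sqrt_sq hm

end Aux

/-- For any finite family of Hermitian n×n complex matrices,
max_{i,j∈{1,2}} |α_i α_j| ≥ max_{u∈{1,…,5}} |β_u|. -/
theorem max_beta_le_max_alpha {n : ℕ} {I : Type} [Fintype I]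
    (R : I → Matrix (Fin n) (Fin n) ℂ) (hR : ∀ μ, (R μ).IsHermitian) :
    maxBeta R ≤ maxAlpha R := by
  letI : SeminormedAddCommGroup (Matrix (Fin n) (Fin n) ℂ) :=
    Matrix.frobeniusSeminormedAddCommGroup
  set s : I → ℝ := fun μ => ‖R μ‖ with hs
  set t : I → ℝ := fun μ => rtr (R μ) with ht
  have hH : ∀ μ, (R μ)ᴴ = R μ := fun μ => hR μ
  -- basic facts
  have hgself : ∀ μ, rtr (R μ * R μ) = s μ ^ 2 := fun μ => by
    have h := rtr_self (R μ); rwa [hH μ] at h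
  have ha2 : alpha2 R = ∑ μ, s μ ^ 2 := by
    unfold alpha2; exact Finset.sum_congr rfl fun μ _ => hgself μ
  have ha1 : alpha1 R = ∑ μ, t μ ^ 2 := rfl
  have ha1n : 0 ≤ alpha1 R := by
    rw [ha1]; exact Finset.sum_nonneg fun μ _ => sq_nonneg _
  have ha2n : 0 ≤ alpha2 R := by
    rw [ha2]; exact Finset.sum_nonneg fun μ _ => sq_nonneg _
  have hsn : ∀ μ, 0 ≤ s μ := fun μ => norm_nonneg _
  -- per-pair Cauchy–Schwarz bounds
  have hG : ∀ μ ν, |rtr (R μ * R ν)| ≤ s μ * s ν := fun μ ν => by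
    rw [← hH μ]; exact mat_cs (R μ) (R ν)
  have hG3 : ∀ μ ν, |rtr (R μ * (R ν * R ν))| ≤ s μ * (s ν * s ν) := fun μ ν => by
    rw [← hH μ]
    calc |rtr ((R μ)ᴴ * (R ν * R ν))| ≤ ‖R μ‖ * ‖R ν * R ν‖ := mat_cs _ _
      _ ≤ s μ * (s ν * s ν) :=
        mul_le_mul_of_nonneg_left (Matrix.frobenius_norm_mul _ _) (hsn μ)
  have hG4eq : ∀ μ ν, rtr (R μ * R μ * (R ν * R ν)) = ‖R ν * R μ‖ ^ 2 := fun μ ν => by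
    have h1 : (R ν * R μ)ᴴ * (R ν * R μ) = R μ * R ν * (R ν * R μ) := by
      rw [Matrix.conjTranspose_mul, hH μ, hH ν]
    have h2 : Matrix.trace (R μ * R μ * (R ν * R ν)) =
        Matrix.trace (R μ * R ν * (R ν * R μ)) := by
      rw [mul_assoc (R μ) (R μ), Matrix.trace_mul_comm (R μ) (R μ * (R ν * R ν))]
      simp only [mul_assoc]
    rw [← rtr_self (R ν * R μ), h1, rtr, rtr, h2]
  have hG4 : ∀ μ ν, |rtr (R μ * R μ * (R ν * R ν))| ≤ s μ * s μ * (s ν * s ν) := fun μ ν => by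
    rw [hG4eq μ ν, abs_of_nonneg (sq_nonneg _)]
    calc ‖R ν * R μ‖ ^ 2 ≤ (s ν * s μ) ^ 2 :=
          pow_le_pow_left₀ (norm_nonneg _) (Matrix.frobenius_norm_mul _ _) 2
      _ = s μ * s μ * (s ν * s ν) := by ring
  have hG5 : ∀ μ ν, |rtr (R μ * R ν * R μ * R ν)| ≤ s μ * s μ * (s ν * s ν) := fun μ ν => by
    have h1 : (R ν * R μ)ᴴ * (R μ * R ν) = R μ * R ν * R μ * R ν := by
      rw [Matrix.conjTranspose_mul, hH μ, hH ν]; simp only [mul_assoc]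
    calc |rtr (R μ * R ν * R μ * R ν)| = |rtr ((R ν * R μ)ᴴ * (R μ * R ν))| := by rw [h1]
      _ ≤ ‖R ν * R μ‖ * ‖R μ * R ν‖ := mat_cs _ _
      _ ≤ (s ν * s μ) * (s μ * s ν) :=
        mul_le_mul (Matrix.frobenius_norm_mul _ _) (Matrix.frobenius_norm_mul _ _)
          (norm_nonneg _) (mul_nonneg (hsn ν) (hsn μ))
      _ = s μ * s μ * (s ν * s ν) := by ring
  -- the key scalar sums
  have hP := Finset.sum_mul_sq_le_sq_mul_sq Finset.univ s (fun μ => |t μ|)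
  have hPt : (∑ μ, |t μ| ^ 2) = alpha1 R := by
    rw [ha1]; exact Finset.sum_congr rfl fun μ _ => sq_abs _
  rw [hPt] at hP
  have hP2 : (∑ μ, s μ * |t μ|) ^ 2 ≤ alpha2 R * alpha1 R := by
    calc (∑ μ, s μ * |t μ|) ^ 2 ≤ (∑ μ, s μ ^ 2) * alpha1 R := hP
      _ = alpha2 R * alpha1 R := by rw [ha2]
  have hPn : 0 ≤ ∑ μ, s μ * |t μ| :=
    Finset.sum_nonneg fun μ _ => mul_nonneg (hsn μ) (abs_nonneg _)
  -- maxAlpha components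
  have hM12 : |alpha1 R * alpha2 R| ≤ maxAlpha R :=
    le_trans (le_max_right _ _) (le_max_left _ _)
  have hM21 : |alpha2 R * alpha1 R| ≤ maxAlpha R :=
    le_trans (le_max_left _ _) (le_max_right _ _)
  have hM22 : |alpha2 R * alpha2 R| ≤ maxAlpha R :=
    le_trans (le_max_right _ _) (le_max_right _ _)
  have hA22 : alpha2 R * alpha2 R ≤ maxAlpha R := by
    rw [← abs_of_nonneg (mul_nonneg ha2n ha2n)]; exact hM22
  have hA21 : alpha2 R * alpha1 R ≤ maxAlpha R := by
    rw [← abs_of_nonneg (mul_nonneg ha2n ha1n)]; exact hM21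
  -- double sum of s²s' ² equals α₂²
  have hSS : (∑ μ, ∑ ν, s μ ^ 2 * s ν ^ 2) = alpha2 R * alpha2 R := by
    rw [ha2, Finset.sum_mul_sum]
  -- bound each beta
  have hb1 : |beta1 R| ≤ maxAlpha R := by
    refine le_trans ?_ hA22
    rw [abs_of_nonneg (Finset.sum_nonneg fun μ _ =>
      Finset.sum_nonneg fun ν _ => sq_nonneg _), ← hSS]
    refine Finset.sum_le_sum fun μ _ => Finset.sum_le_sum fun ν _ => ?_
    calc (rtr (R μ * R ν)) ^ 2 = |rtr (R μ * R ν)| ^ 2 := (sq_abs _).symm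
      _ ≤ (s μ * s ν) ^ 2 := pow_le_pow_left₀ (abs_nonneg _) (hG μ ν) 2
      _ = s μ ^ 2 * s ν ^ 2 := by ring
  have hb2 : |beta2 R| ≤ maxAlpha R := by
    refine le_trans ?_ hA21
    calc |beta2 R| ≤ ∑ μ, ∑ ν, |rtr (R μ * R ν) * rtr (R μ) * rtr (R ν)| :=
          le_trans (Finset.abs_sum_le_sum_abs _ _)
            (Finset.sum_le_sum fun μ _ => Finset.abs_sum_le_sum_abs _ _)
      _ ≤ ∑ μ, ∑ ν, (s μ * |t μ|) * (s ν * |t ν|) := by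
          refine Finset.sum_le_sum fun μ _ => Finset.sum_le_sum fun ν _ => ?_
          rw [abs_mul, abs_mul]
          calc |rtr (R μ * R ν)| * |rtr (R μ)| * |rtr (R ν)|
              ≤ (s μ * s ν) * |t μ| * |t ν| := by
                refine mul_le_mul_of_nonneg_right
                  (mul_le_mul_of_nonneg_right (hG μ ν) (abs_nonneg _)) (abs_nonneg _)
            _ = (s μ * |t μ|) * (s ν * |t ν|) := by ring
      _ = (∑ μ, s μ * |t μ|) ^ 2 := by rw [← Finset.sum_mul_sum, sq]
      _ ≤ alpha2 R * alpha1 R := hP2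
  have hb3 : |beta3 R| ≤ maxAlpha R := by
    have hc : |beta3 R| ≤ (∑ μ, s μ * |t μ|) * alpha2 R := by
      calc |beta3 R| ≤ ∑ μ, ∑ ν, |rtr (R μ * (R ν * R ν)) * rtr (R μ)| :=
            le_trans (Finset.abs_sum_le_sum_abs _ _)
              (Finset.sum_le_sum fun μ _ => Finset.abs_sum_le_sum_abs _ _)
        _ ≤ ∑ μ, ∑ ν, (s μ * |t μ|) * (s ν ^ 2) := by
            refine Finset.sum_le_sum fun μ _ => Finset.sum_le_sum fun ν _ => ?_
            rw [abs_mul]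
            calc |rtr (R μ * (R ν * R ν))| * |rtr (R μ)|
                ≤ (s μ * (s ν * s ν)) * |t μ| :=
                  mul_le_mul_of_nonneg_right (hG3 μ ν) (abs_nonneg _)
              _ = (s μ * |t μ|) * (s ν ^ 2) := by ring
        _ = (∑ μ, s μ * |t μ|) * (∑ ν, s ν ^ 2) := by rw [← Finset.sum_mul_sum]
        _ = (∑ μ, s μ * |t μ|) * alpha2 R := by rw [ha2]
    refine le_trans hc ?_
    refine le_trans (sqrt_max_of_sq_le (a := alpha1 R * alpha2 R) (b := alpha2 R * alpha2 R)
      (mul_nonneg ha1n ha2n) (mul_nonneg ha2n ha2n) (mul_nonneg hPn ha2n) ?_) ?_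
    · calc ((∑ μ, s μ * |t μ|) * alpha2 R) ^ 2
          = (∑ μ, s μ * |t μ|) ^ 2 * (alpha2 R * alpha2 R) := by ring
        _ ≤ (alpha2 R * alpha1 R) * (alpha2 R * alpha2 R) :=
            mul_le_mul_of_nonneg_right hP2 (mul_nonneg ha2n ha2n)
        _ = alpha1 R * alpha2 R * (alpha2 R * alpha2 R) := by ring
    · exact max_le (by rw [← abs_of_nonneg (mul_nonneg ha1n ha2n)]; exact hM12) hA22
  have hb4 : |beta4 R| ≤ maxAlpha R := by
    refine le_trans ?_ hA22
    calc |beta4 R| ≤ ∑ μ, ∑ ν, |rtr (R μ * R μ * (R ν * R ν))| :=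
          le_trans (Finset.abs_sum_le_sum_abs _ _)
            (Finset.sum_le_sum fun μ _ => Finset.abs_sum_le_sum_abs _ _)
      _ ≤ ∑ μ, ∑ ν, s μ ^ 2 * s ν ^ 2 := by
          refine Finset.sum_le_sum fun μ _ => Finset.sum_le_sum fun ν _ => ?_
          calc |rtr (R μ * R μ * (R ν * R ν))| ≤ s μ * s μ * (s ν * s ν) := hG4 μ ν
            _ = s μ ^ 2 * s ν ^ 2 := by ring
      _ = alpha2 R * alpha2 R := hSS
  have hb5 : |beta5 R| ≤ maxAlpha R := by
    refine le_trans ?_ hA22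
    calc |beta5 R| ≤ ∑ μ, ∑ ν, |rtr (R μ * R ν * R μ * R ν)| :=
          le_trans (Finset.abs_sum_le_sum_abs _ _)
            (Finset.sum_le_sum fun μ _ => Finset.abs_sum_le_sum_abs _ _)
      _ ≤ ∑ μ, ∑ ν, s μ ^ 2 * s ν ^ 2 := by
          refine Finset.sum_le_sum fun μ _ => Finset.sum_le_sum fun ν _ => ?_
          calc |rtr (R μ * R ν * R μ * R ν)| ≤ s μ * s μ * (s ν * s ν) := hG5 μ ν
            _ = s μ ^ 2 * s ν ^ 2 := by ring
      _ = alpha2 R * alpha2 R := hSS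
  exact max_le hb1 (max_le hb2 (max_le hb3 (max_le hb4 hb5)))
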